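/- Let (W,S) be a Coxeter system, let s, t ∈ S, and let w be a word on S such that the words sw and wt are both reduced but the word swt is not reduced. Then sw and wt represent the same element of W, i.e. s·𝐰 = 𝐰·t in W, where 𝐰 is the element represented by w. -/

import Mathlib

namespace CoxAuxProof

open List CoxeterSystem

variable {B W : Type*} [Group W] {M : CoxeterMatrix B} (cs : CoxeterSystem M W)
variable [DecidableEq W]

/-- The sign-flipping involution attached to a simple reflection. -/
def eta (i : B) : W × ℤˣ → W × ℤˣ :=
  fun p => (cs.simple i * p.1 * cs.simple i, (if p.1 = cs.simple i then -1 else 1) * p.2)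

lemma conj_simple_eq_simple_iff (i : B) (t : W) :
    cs.simple i * t * cs.simple i = cs.simple i ↔ t = cs.simple i := by
  constructor
  · intro h
    have := congrArg (fun x => cs.simple i * x * cs.simple i) h
    simpa [mul_assoc, cs.simple_mul_simple_self, cs.simple_mul_simple_cancel_left,
      cs.simple_mul_simple_cancel_right] using this
  · rintro rfl
    simp [mul_assoc, cs.simple_mul_simple_self, cs.simple_mul_simple_cancel_left]

lemma eta_involutive (i : B) : Function.Involutive (eta cs i) := by
  intro p
  simp only [eta]
  have hfst : cs.simple i * (cs.simple i * p.1 * cs.simple i) * cs.simple i = p.1 := by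
    simp [mul_assoc, cs.simple_mul_simple_cancel_left, cs.simple_mul_simple_cancel_right]
  refine Prod.ext (by simpa using hfst) ?_
  simp only [conj_simple_eq_simple_iff]
  by_cases h : p.1 = cs.simple i <;> simp [h]

/-- `eta` as a permutation. -/
def etaPerm (i : B) : Equiv.Perm (W × ℤˣ) := (eta_involutive cs i).toPerm

lemma etaPerm_apply (i : B) (p : W × ℤˣ) : etaPerm cs i p = eta cs i p := rfl

lemma simple_mul_pow (i j : B) (k : ℕ) :
    cs.simple j * (cs.simple i * cs.simple j) ^ k
      = ((cs.simple i * cs.simple j)⁻¹) ^ k * cs.simple j := by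
  induction k with
  | zero => simp
  | succ k ih =>
    rw [pow_succ', ← mul_assoc, show cs.simple j * (cs.simple i * cs.simple j)
        = (cs.simple i * cs.simple j)⁻¹ * cs.simple j by
      simp [mul_inv_rev, cs.inv_simple, mul_assoc, cs.simple_mul_simple_cancel_left],
      mul_assoc, ih, pow_succ', ← mul_assoc]

/-- The elements at which sign flips occur while applying `(etaPerm i * etaPerm j) ^ k`. -/
def flipList (i j : B) (k : ℕ) : List W :=
  (List.range k).map (fun l => ((cs.simple i * cs.simple j)⁻¹) ^ l * cs.simple j)

lemma pow_etaPerm_apply (i j : B) (k : ℕ) (p : W × ℤˣ) :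
    ((etaPerm cs i * etaPerm cs j) ^ k) p
      = ((cs.simple i * cs.simple j) ^ k * p.1 * ((cs.simple i * cs.simple j)⁻¹) ^ k,
          (-1 : ℤˣ) ^ ((flipList cs i j (2 * k)).count p.1) * p.2) := by
  induction k with
  | zero => simp [flipList]
  | succ k ih =>
    set q := cs.simple i * cs.simple j with hq
    have hsw : ∀ m : ℕ, cs.simple j * q ^ m = q⁻¹ ^ m * cs.simple j := by
      intro m; rw [hq]; exact simple_mul_pow cs i j m
    have hsisj : cs.simple j * cs.simple i * cs.simple j = q⁻¹ * cs.simple j := by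
      rw [hq, mul_inv_rev, cs.inv_simple, cs.inv_simple]
    have e1 : q⁻¹ ^ k * cs.simple j * q ^ k = q⁻¹ ^ (2 * k) * cs.simple j := by
      rw [mul_assoc, hsw k, ← mul_assoc, ← pow_add, ← two_mul]
    have e2 : q⁻¹ ^ k * (cs.simple j * cs.simple i * cs.simple j) * q ^ k
        = q⁻¹ ^ (2 * k + 1) * cs.simple j := by
      rw [hsisj, mul_assoc, mul_assoc, hsw k, ← mul_assoc, ← mul_assoc, ← pow_succ,
        ← pow_add]
      have hkk : k + 1 + k = 2 * k + 1 := by ring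
      rw [hkk]
    set t := q ^ k * p.1 * q⁻¹ ^ k with ht
    rw [pow_succ', Equiv.Perm.mul_apply, ih]
    have h2k : 2 * (k + 1) = (2 * k) + 1 + 1 := by ring
    have hflip : flipList cs i j (2 * (k + 1))
        = flipList cs i j (2 * k) ++ [q⁻¹ ^ (2 * k) * cs.simple j,
            q⁻¹ ^ (2 * k + 1) * cs.simple j] := by
      rw [h2k]
      rw [flipList, flipList, List.range_succ, List.range_succ, List.map_append,
        List.map_append]
      simp only [List.map_cons, List.map_nil, List.append_assoc, List.singleton_append,
        List.nil_append]
      rfl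
    have key1 : t = cs.simple j ↔ p.1 = q⁻¹ ^ (2 * k) * cs.simple j := by
      rw [ht, ← e1]
      constructor
      · intro h
        rw [← h]
        group
      · intro h
        rw [h]
        group
    have key2 : cs.simple j * t * cs.simple j = cs.simple i
        ↔ p.1 = q⁻¹ ^ (2 * k + 1) * cs.simple j := by
      rw [ht, ← e2]
      constructor
      · intro h
        have h' : q ^ k * p.1 * q⁻¹ ^ k = cs.simple j * cs.simple i * cs.simple j := by
          rw [← h]
          simp [mul_assoc, cs.simple_mul_simple_self, cs.simple_mul_simple_cancel_left]
        rw [← h']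
        group
      · intro h
        rw [h]
        have hg : cs.simple j * (q ^ k * (q⁻¹ ^ k * (cs.simple j * cs.simple i * cs.simple j)
              * q ^ k) * q⁻¹ ^ k) * cs.simple j
            = cs.simple j * (cs.simple j * cs.simple i * cs.simple j) * cs.simple j := by
          group
        rw [hg]
        simp [mul_assoc, cs.simple_mul_simple_self, cs.simple_mul_simple_cancel_left,
          cs.simple_mul_simple_cancel_right]
    rw [Equiv.Perm.mul_apply, etaPerm_apply, etaPerm_apply]
    simp only [eta]
    refine Prod.ext ?_ ?_
    · show cs.simple i * (cs.simple j * t * cs.simple j) * cs.simple i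
        = q ^ (k + 1) * p.1 * q⁻¹ ^ (k + 1)
      rw [ht, pow_succ', pow_succ]
      have hqinv : q⁻¹ = cs.simple j * cs.simple i := by
        rw [hq, mul_inv_rev, cs.inv_simple, cs.inv_simple]
      nth_rw 3 [hq]
      nth_rw 3 [hqinv]
      group
    · show (if cs.simple j * t * cs.simple j = cs.simple i then (-1:ℤˣ) else 1) *
        ((if t = cs.simple j then (-1:ℤˣ) else 1) *
          ((-1 : ℤˣ) ^ ((flipList cs i j (2 * k)).count p.1) * p.2)) = _
      rw [hflip, List.count_append]
      simp only [key1, key2, List.count_cons, List.count_nil, beq_iff_eq]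
      by_cases h1 : p.1 = q⁻¹ ^ (2 * k) * cs.simple j <;>
        by_cases h2 : p.1 = q⁻¹ ^ (2 * k + 1) * cs.simple j
      · rw [if_pos h1, if_pos h2, if_pos h2.symm, if_pos h1.symm, pow_add]
        simp [pow_succ, mul_assoc]
      · rw [if_pos h1, if_neg h2, if_neg (fun hh => h2 hh.symm), if_pos h1.symm, pow_add]
        simp [pow_succ, mul_assoc]
      · rw [if_neg h1, if_pos h2, if_pos h2.symm, if_neg (fun hh => h1 hh.symm), pow_add]
        simp [pow_succ, mul_assoc]
      · rw [if_neg h1, if_neg h2, if_neg (fun hh => h2 hh.symm), if_neg (fun hh => h1 hh.symm),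
          pow_add]
        simp [pow_succ, mul_assoc]

lemma etaPerm_liftable : M.IsLiftable (etaPerm cs) := by
  classical
  intro i j
  have hrel : (cs.simple i * cs.simple j) ^ M i j = 1 := cs.simple_mul_simple_pow i j
  ext p
  · rw [Equiv.Perm.one_apply, pow_etaPerm_apply, hrel]
    simp
  · rw [Equiv.Perm.one_apply, pow_etaPerm_apply]
    have hperiod : ∀ l, ((cs.simple i * cs.simple j)⁻¹) ^ (M i j + l)
        = ((cs.simple i * cs.simple j)⁻¹) ^ l := by
      intro l
      rw [pow_add, inv_pow, hrel, inv_one, one_mul]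
    have hcount : (flipList cs i j (2 * M i j)).count p.1
        = 2 * (flipList cs i j (M i j)).count p.1 := by
      rw [two_mul, flipList, List.range_add, List.map_append, List.count_append]
      have : (List.map (fun l => ((cs.simple i * cs.simple j)⁻¹) ^ l * cs.simple j)
          (List.map (fun l => M i j + l) (List.range (M i j))))
          = flipList cs i j (M i j) := by
        rw [List.map_map, flipList]
        congr 1
        funext l
        simp only [Function.comp_apply]
        rw [hperiod l]
      rw [this]
      rw [flipList]
      ring
    rw [hcount]
    simp [pow_mul]

/-- The sign representation used for the parity invariance of inversion sequences. -/
def phi : W →* Equiv.Perm (W × ℤˣ) := cs.lift ⟨etaPerm cs, etaPerm_liftable cs⟩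

lemma phi_simple (i : B) : phi cs (cs.simple i) = etaPerm cs i :=
  cs.lift_apply_simple (etaPerm_liftable cs) i

lemma phi_wordProd_inv_apply (ω : List B) (t : W) (ε : ℤˣ) :
    phi cs (cs.wordProd ω)⁻¹ (t, ε)
      = ((cs.wordProd ω)⁻¹ * t * cs.wordProd ω,
          (-1 : ℤˣ) ^ ((cs.leftInvSeq ω).count t) * ε) := by
  induction ω generalizing t ε with
  | nil => simp
  | cons i ω ih =>
    rw [cs.wordProd_cons, mul_inv_rev, map_mul, Equiv.Perm.mul_apply, cs.inv_simple,
      phi_simple, etaPerm_apply]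
    simp only [eta]
    rw [ih]
    have hcount : (cs.leftInvSeq (i :: ω)).count t
        = (cs.leftInvSeq ω).count (cs.simple i * t * cs.simple i)
          + (if t = cs.simple i then 1 else 0) := by
      rw [CoxeterSystem.leftInvSeq]
      rw [List.count_cons]
      have : (List.map (MulAut.conj (cs.simple i)) (cs.leftInvSeq ω)).count t
          = (cs.leftInvSeq ω).count (cs.simple i * t * cs.simple i) := by
        have ht : t = MulAut.conj (cs.simple i) (cs.simple i * t * cs.simple i) := by
          simp [MulAut.conj_apply, cs.inv_simple, mul_assoc,
            cs.simple_mul_simple_cancel_left, cs.simple_mul_simple_cancel_right]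
        nth_rw 1 [ht]
        exact List.count_map_of_injective _ _ (MulAut.conj (cs.simple i)).injective _
      rw [this]
      congr 1
      rcases eq_or_ne t (cs.simple i) with h | h
      · simp [h]
      · simp [h, Ne.symm h]
    refine Prod.ext ?_ ?_
    · show (cs.wordProd ω)⁻¹ * (cs.simple i * t * cs.simple i) * cs.wordProd ω = _
      simp [mul_assoc]
    · show (-1 : ℤˣ) ^ ((cs.leftInvSeq ω).count (cs.simple i * t * cs.simple i)) *
        ((if t = cs.simple i then (-1:ℤˣ) else 1) * ε) = _
      rw [hcount, pow_add]
      by_cases h : t = cs.simple i <;> simp [h] <;> ring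

/-- Parity invariance: the parity of the number of occurrences of `t` in the left inversion
sequence of a word depends only on the element the word represents. -/
lemma count_leftInvSeq_parity {ω₁ ω₂ : List B}
    (h : cs.wordProd ω₁ = cs.wordProd ω₂) (t : W) :
    (-1 : ℤˣ) ^ ((cs.leftInvSeq ω₁).count t) = (-1 : ℤˣ) ^ ((cs.leftInvSeq ω₂).count t) := by
  have h1 := phi_wordProd_inv_apply cs ω₁ t 1
  have h2 := phi_wordProd_inv_apply cs ω₂ t 1
  rw [h] at h1
  rw [h1] at h2
  have := congrArg Prod.snd h2
  simpa using this

end CoxAuxProof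

open CoxAuxProof List in
/-- If `s·w` and `w·t` are reduced words but `s·w·t` is not, then `sw` and `wt` represent the
same element of `W`, i.e. `s·𝐰 = 𝐰·t`. -/
theorem simple_mul_eq_mul_simple_of_not_reduced {B W : Type*} [Group W] {M : CoxeterMatrix B}
    (cs : CoxeterSystem M W) (i j : B) (w : List B)
    (h1 : cs.IsReduced (i :: w)) (h2 : cs.IsReduced (w ++ [j]))
    (h3 : ¬ cs.IsReduced (i :: (w ++ [j]))) :
    cs.simple i * cs.wordProd w = cs.wordProd w * cs.simple j := by
  classical
  set n := w.length with hn
  set u := cs.wordProd w with hu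
  have hsu : cs.length (cs.simple i * u) = n + 1 := by
    have := h1
    rwa [CoxeterSystem.IsReduced, cs.wordProd_cons, List.length_cons] at this
  have hut : cs.length (u * cs.simple j) = n + 1 := by
    have := h2
    rwa [CoxeterSystem.IsReduced, cs.wordProd_append, cs.wordProd_singleton,
      List.length_append, List.length_singleton] at this
  have hlu : cs.length u = n := by
    have hle : cs.length u ≤ n := cs.length_wordProd_le w
    have hge : n + 1 ≤ cs.length u + 1 := by
      calc n + 1 = cs.length (cs.simple i * u) := hsu.symm
        _ ≤ cs.length (cs.simple i) + cs.length u := cs.length_mul_le _ _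
        _ = 1 + cs.length u := by rw [cs.length_simple]
        _ = cs.length u + 1 := by ring
    omega
  -- length of s i * u * s j is n
  have hsut : cs.length (cs.simple i * (u * cs.simple j)) = n := by
    rcases cs.length_simple_mul (u * cs.simple j) i with h | h
    · exfalso
      apply h3
      rw [CoxeterSystem.IsReduced, cs.wordProd_cons, cs.wordProd_append, cs.wordProd_singleton,
        ← hu, h, hut]
      simp
      exact hn
    · omega
  -- pick a reduced word for s i * (u * s j)
  obtain ⟨ρ, hρred, hρ⟩ := cs.exists_reduced_word' (cs.simple i * (u * cs.simple j))
  have hρlen : ρ.length = n := by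
    have := hρred
    rw [CoxeterSystem.IsReduced, ← hρ] at this
    omega
  -- ω₂ := i :: ρ represents the same element as ω₁ := w ++ [j]
  have hprod : cs.wordProd (w ++ [j]) = cs.wordProd (i :: ρ) := by
    rw [cs.wordProd_cons, ← hρ, cs.wordProd_append, cs.wordProd_singleton, ← hu,
      cs.simple_mul_simple_cancel_left]
  -- count of s i in leftInvSeq ρ is zero
  have hcountρ : (cs.leftInvSeq ρ).count (cs.simple i) = 0 := by
    rw [List.count_eq_zero]
    intro hmem
    have hinv := cs.isLeftInversion_of_mem_leftInvSeq hρred hmem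
    have hlt := hinv.2
    rw [← hρ, cs.simple_mul_simple_cancel_left] at hlt
    omega
  -- count of s i in leftInvSeq (i :: ρ) is one
  have hcount2 : (cs.leftInvSeq (i :: ρ)).count (cs.simple i) = 1 := by
    rw [CoxeterSystem.leftInvSeq, List.count_cons]
    have hfix : (MulAut.conj (cs.simple i) : W ≃* W) (cs.simple i) = cs.simple i := by
      simp [MulAut.conj_apply, cs.inv_simple, cs.simple_mul_simple_cancel_right]
    have hmap : (List.map (MulAut.conj (cs.simple i)) (cs.leftInvSeq ρ)).count (cs.simple i)
        = 0 := by
      calc (List.map (MulAut.conj (cs.simple i)) (cs.leftInvSeq ρ)).count (cs.simple i)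
          = (List.map (MulAut.conj (cs.simple i)) (cs.leftInvSeq ρ)).count
              ((MulAut.conj (cs.simple i) : W ≃* W) (cs.simple i)) := by rw [hfix]
        _ = (cs.leftInvSeq ρ).count (cs.simple i) :=
            List.count_map_of_injective _ _ (MulAut.conj (cs.simple i)).injective _
        _ = 0 := hcountρ
    rw [hmap]
    simp
  -- parity: count of s i in leftInvSeq (w ++ [j]) is odd, hence s i ∈ leftInvSeq (w ++ [j])
  have hpar := count_leftInvSeq_parity cs hprod (cs.simple i)
  rw [hcount2, pow_one] at hpar
  have hmem : cs.simple i ∈ cs.leftInvSeq (w ++ [j]) := by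
    by_contra hnot
    rw [List.count_eq_zero_of_not_mem hnot, pow_zero] at hpar
    exact (by decide : ((1:ℤˣ) ≠ -1)) hpar
  -- apply exchange: s i * π (w ++ [j]) = π ((w ++ [j]).eraseIdx k)
  obtain ⟨k, hk, hgetk⟩ := List.mem_iff_getElem.mp hmem
  have hklt : k < n + 1 := by
    have := cs.length_leftInvSeq (w ++ [j])
    rw [List.length_append, List.length_singleton] at this
    omega
  have hexch : cs.simple i * cs.wordProd (w ++ [j]) = cs.wordProd ((w ++ [j]).eraseIdx k) := by
    rw [← hgetk, ← List.getD_eq_getElem _ 1 hk]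
    exact cs.getD_leftInvSeq_mul_wordProd (w ++ [j]) k
  rw [cs.wordProd_append, cs.wordProd_singleton, ← hu] at hexch
  rcases lt_or_eq_of_le (Nat.lt_succ_iff.mp hklt) with hkn | hkn
  · -- k < n : contradiction with reducedness of i :: w
    exfalso
    rw [List.eraseIdx_append_of_lt_length (by omega : k < w.length),
      cs.wordProd_append, cs.wordProd_singleton] at hexch
    have : cs.simple i * u = cs.wordProd (w.eraseIdx k) := by
      have := congrArg (fun x => x * cs.simple j) hexch
      simpa [mul_assoc, cs.simple_mul_simple_cancel_right] using this
    have hle : cs.length (cs.simple i * u) ≤ (w.eraseIdx k).length := by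
      rw [this]; exact cs.length_wordProd_le _
    have : (w.eraseIdx k).length = n - 1 := by
      rw [List.length_eraseIdx_of_lt (by omega : k < w.length)]
    omega
  · -- k = n : conclude
    have herase : (w ++ [j]).eraseIdx k = w := by
      rw [hkn, List.eraseIdx_eq_take_drop_succ]
      have h1' : (w ++ [j]).take n = w := by
        rw [hn, List.take_left]
      have h2' : (w ++ [j]).drop (n + 1) = [] := by
        apply List.drop_eq_nil_of_le
        simp [hn]
      rw [h1', h2']
      simp
    rw [herase, ← hu] at hexch
    have := congrArg (fun x => x * cs.simple j) hexch
    simpa [mul_assoc, cs.simple_mul_simple_cancel_right] using this
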